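/- Let H be a Hopf algebra with bijective antipode over a field k, B ⊆ H a Hopf subalgebra, and Ξ the restriction to B of a finite-dimensional left H-module. Then S(Ξ) := {ζ ∈ Ξ ⊗ H* : (id ⊗ L_b)ζ = (S(b) ⊗ id)ζ for all b ∈ B} is a free left module of rank dim Ξ over the convolution algebra A^B := {f ∈ H* : f(S(b)y) = ε(b)f(y) for all b ∈ B, y ∈ H}; explicitly, the map κ(v ⊗ f) = Σ v₍₀₎ ⊗ f * S⁻¹(v₍₁₎) restricts to an A^B-module isomorphism S(Ξ) ≅ Ξ ⊗ A^B. -/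

import Mathlib

open TensorProduct

noncomputable section

variable {k H V ι : Type*} [Field k] [Ring H] [HopfAlgebra k H]
  [AddCommGroup V] [Module k V] [Module H V] [IsScalarTower k H V] [SMulCommClass k H V]
  [Fintype ι]

/-- The convolution product on `H*`: `(f * g)(x) = Σ f(x₍₁₎) g(x₍₂₎)`. -/
def conv (f g : H →ₗ[k] k) : H →ₗ[k] k :=
  LinearMap.mul' k k ∘ₗ TensorProduct.map f g ∘ₗ Coalgebra.comul

lemma conv_add_left (f f' g : H →ₗ[k] k) : conv (f + f') g = conv f g + conv f' g := by
  unfold conv; rw [TensorProduct.map_add_left, LinearMap.add_comp, LinearMap.comp_add]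

lemma conv_smul_left (c : k) (f g : H →ₗ[k] k) : conv (c • f) g = c • conv f g := by
  unfold conv; rw [TensorProduct.map_smul_left, LinearMap.smul_comp, LinearMap.comp_smul]

lemma conv_add_right (f g g' : H →ₗ[k] k) : conv f (g + g') = conv f g + conv f g' := by
  unfold conv; rw [TensorProduct.map_add_right, LinearMap.add_comp, LinearMap.comp_add]

lemma conv_smul_right (c : k) (f g : H →ₗ[k] k) : conv f (c • g) = c • conv f g := by
  unfold conv; rw [TensorProduct.map_smul_right, LinearMap.smul_comp, LinearMap.comp_smul]

/-- Left convolution by `f`, as a linear endomorphism `a ↦ f * a` of `H*`. -/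
def convL (f : H →ₗ[k] k) : (H →ₗ[k] k) →ₗ[k] (H →ₗ[k] k) where
  toFun a := conv f a
  map_add' a a' := by simp only [conv_add_right]
  map_smul' c a := by simp only [conv_smul_right, RingHom.id_apply]

/-- Left translation `L_b : f ↦ (y ↦ f (S(b) y))` as a linear endomorphism of `H*`. -/
def Ltrans (x : H) : (H →ₗ[k] k) →ₗ[k] (H →ₗ[k] k) where
  toFun f := f ∘ₗ LinearMap.mulLeft k (HopfAlgebra.antipode (R := k) x)
  map_add' f g := LinearMap.add_comp _ _ _
  map_smul' c f := LinearMap.smul_comp _ _ _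

/-- The action of `x ∈ H` on `V` as a `k`-linear endomorphism. -/
def actV (x : H) : V →ₗ[k] V where
  toFun v := x • v
  map_add' v w := smul_add x v w
  map_smul' c v := smul_comm x c v

/-- The matrix coefficient functional `v ↦ (x ↦ (x • v)ᵢ)` of the `H`-module `V` with
respect to the basis `b`. -/
def coeffL (b : Module.Basis ι k V) (i : ι) : V →ₗ[k] (H →ₗ[k] k) where
  toFun v :=
    { toFun := fun x => b.repr (x • v) i
      map_add' := fun x y => by simp [add_smul]
      map_smul' := fun c x => by simp [smul_assoc] }
  map_add' v w := by ext x; simp [smul_add]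
  map_smul' c v := by ext x; simp [smul_comm x c v]

/-- The coaction `δ : V → V ⊗ H*`, `δ(v) = Σ v₍₀₎ ⊗ v₍₁₎`. -/
def coact (b : Module.Basis ι k V) : V →ₗ[k] V ⊗[k] (H →ₗ[k] k) :=
  ∑ i : ι, (TensorProduct.mk k V (H →ₗ[k] k) (b i)) ∘ₗ coeffL b i

/-- The bilinear map `(g, f) ↦ f * (g ∘ S⁻¹)` on `H*`. -/
def convBilS (Sinv : H →ₗ[k] H) : (H →ₗ[k] k) →ₗ[k] (H →ₗ[k] k) →ₗ[k] (H →ₗ[k] k) :=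
  LinearMap.mk₂ k (fun g f => conv f (g ∘ₗ Sinv))
    (fun g g' f => by simp only [LinearMap.add_comp, conv_add_right])
    (fun c g f => by simp only [LinearMap.smul_comp, conv_smul_right])
    (fun g f f' => by simp only [conv_add_left])
    (fun g c f => by simp only [conv_smul_left])

/-- The map `κ : V ⊗ H* → V ⊗ H*`, `κ(v ⊗ f) = Σ v₍₀₎ ⊗ f * (S⁻¹)ᵗ(v₍₁₎)`. -/
def kap (b : Module.Basis ι k V) (Sinv : H →ₗ[k] H) :
    V ⊗[k] (H →ₗ[k] k) →ₗ[k] V ⊗[k] (H →ₗ[k] k) :=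
  (TensorProduct.map LinearMap.id (TensorProduct.lift (convBilS Sinv))) ∘ₗ
    (TensorProduct.assoc k V (H →ₗ[k] k) (H →ₗ[k] k)).toLinearMap ∘ₗ
    (TensorProduct.map (coact b) LinearMap.id)

variable (B : Subalgebra k H)

/-- The subspace `A^B = {f ∈ H* : f(S(b)y) = ε(b) f(y) for all b ∈ B, y ∈ H}` of
`B`-left-invariant functionals, as a `k`-submodule of `H*`. -/
def ABsub : Submodule k (H →ₗ[k] k) where
  carrier := {f | ∀ b ∈ B, ∀ y : H,
    f (HopfAlgebra.antipode (R := k) b * y) = Coalgebra.counit (R := k) b * f y}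
  add_mem' := fun {f g} hf hg b hb y => by
    simp only [LinearMap.add_apply, hf b hb y, hg b hb y, mul_add]
  zero_mem' := fun b hb y => by simp
  smul_mem' := fun c f hf b hb y => by
    simp only [LinearMap.smul_apply, hf b hb y, smul_eq_mul]; ring

/-- The space of sections `S(Ξ) = {ζ ∈ V ⊗ H* : (id ⊗ L_b)ζ = (S(b) ⊗ id)ζ ∀ b ∈ B}`,
where `Ξ` is the restriction of the `H`-module `V` to `B`. -/
def SXi : Set (V ⊗[k] (H →ₗ[k] k)) :=
  {ζ | ∀ b ∈ B,
    TensorProduct.map (LinearMap.id : V →ₗ[k] V) (Ltrans b) ζ =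
    TensorProduct.map (actV (HopfAlgebra.antipode (R := k) b)) LinearMap.id ζ}

open Coalgebra HopfAlgebra

/-- Representation of `comul (x*y)` built from representations of `x` and `y`. -/
def prodRepr {x y : H} {κ₁ κ₂ : Type*} (rx : Coalgebra.Repr k x κ₁) (ry : Coalgebra.Repr k y κ₂) :
    Coalgebra.Repr k (x * y) (κ₁ × κ₂) where
  index := rx.index ×ˢ ry.index
  left p := rx.left p.1 * ry.left p.2
  right p := rx.right p.1 * ry.right p.2
  eq := by
    rw [Finset.sum_product]
    simp only [← Algebra.TensorProduct.tmul_mul_tmul]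
    rw [← Finset.sum_mul_sum, rx.eq, ry.eq, Bialgebra.comul_mul]

lemma sum_smul_counit {x : H} {κ₁ : Type*} (r : Coalgebra.Repr k x κ₁) :
    ∑ i ∈ r.index, counit (R := k) (r.right i) • r.left i = x := by
  have h := congrArg (TensorProduct.rid k H) (sum_tmul_counit_eq r)
  rw [map_sum] at h
  simp only [TensorProduct.rid_tmul, one_smul] at h
  exact h

lemma sum_counit_smul {x : H} {κ₁ : Type*} (r : Coalgebra.Repr k x κ₁) :
    ∑ i ∈ r.index, counit (R := k) (r.left i) • r.right i = x := by
  have h := congrArg (TensorProduct.lid k H) (sum_counit_tmul_eq r)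
  rw [map_sum] at h
  simp only [TensorProduct.lid_tmul, one_smul] at h
  exact h

/-- The map `x ↦ Σ S(x₂) ⊗ S(x₁)`. -/
def swapS : H ⊗[k] H →ₗ[k] H ⊗[k] H :=
  (TensorProduct.comm k H H).toLinearMap ∘ₗ
    TensorProduct.map (antipode (R := k)) (antipode (R := k))

@[simp] lemma swapS_tmul (a b : H) :
    swapS (a ⊗ₜ[k] b) = antipode (R := k) b ⊗ₜ[k] antipode (R := k) a := rfl

def Gmap : H →ₗ[k] H ⊗[k] H := swapS ∘ₗ comul

lemma Gmap_repr {x : H} {κ₁ : Type*} (r : Coalgebra.Repr k x κ₁) :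
    Gmap x = ∑ i ∈ r.index,
      antipode (R := k) (r.right i) ⊗ₜ[k] antipode (R := k) (r.left i) := by
  rw [Gmap, LinearMap.comp_apply, ← r.eq, map_sum]
  simp

def auxXi : H ⊗[k] (H ⊗[k] H) →ₗ[k] H ⊗[k] H :=
  (LinearMap.mul' k (H ⊗[k] H)) ∘ₗ TensorProduct.map swapS comul ∘ₗ
    (TensorProduct.assoc k H H H).symm.toLinearMap

@[simp] lemma auxXi_tmul (a b c : H) :
    auxXi (a ⊗ₜ[k] (b ⊗ₜ[k] c)) =
      (antipode (R := k) b ⊗ₜ[k] antipode (R := k) a) * comul (R := k) c := by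
  simp [auxXi]

def auxPsi (a : H) : H ⊗[k] (H ⊗[k] H) →ₗ[k] H ⊗[k] H :=
  (TensorProduct.map
      (LinearMap.mul' k H ∘ₗ (antipode (R := k)).rTensor H)
      (LinearMap.mulLeft k (antipode (R := k) a))) ∘ₗ
    (TensorProduct.assoc k H H H).symm.toLinearMap

@[simp] lemma auxPsi_tmul (a b c d : H) :
    auxPsi a (b ⊗ₜ[k] (c ⊗ₜ[k] d)) =
      (antipode (R := k) b * c) ⊗ₜ[k] (antipode (R := k) a * d) := by
  simp [auxPsi]

lemma sum_Gmap_mul_comul {x : H} {κ₁ : Type*} (r : Coalgebra.Repr k x κ₁) :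
    ∑ i ∈ r.index, Gmap (r.left i) * comul (R := k) (r.right i)
      = counit (R := k) x • 1 := by
  classical
  let s := fun i => ℛ k (r.left i)
  let t := fun i => ℛ k (r.right i)
  have step1 : ∑ i ∈ r.index, Gmap (r.left i) * comul (R := k) (r.right i)
      = ∑ i ∈ r.index, ∑ j ∈ (s i).index,
          auxXi ((s i).left j ⊗ₜ[k] ((s i).right j ⊗ₜ[k] r.right i)) := by
    refine Finset.sum_congr rfl fun i _ => ?_
    rw [Gmap_repr (s i), Finset.sum_mul]
    simp
  have step2 : ∑ i ∈ r.index, ∑ j ∈ (s i).index,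
          auxXi ((s i).left j ⊗ₜ[k] ((s i).right j ⊗ₜ[k] r.right i))
      = ∑ i ∈ r.index, ∑ jj ∈ (t i).index,
          auxXi (r.left i ⊗ₜ[k] ((t i).left jj ⊗ₜ[k] (t i).right jj)) := by
    have h := congrArg auxXi (sum_tmul_tmul_eq r s t)
    simpa only [map_sum] using h
  have step3 : ∀ i ∈ r.index, ∑ jj ∈ (t i).index,
          auxXi (r.left i ⊗ₜ[k] ((t i).left jj ⊗ₜ[k] (t i).right jj))
      = (1 : H) ⊗ₜ[k] (antipode (R := k) (r.left i) * r.right i) := by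
    intro i _
    let u := fun m => ℛ k ((t i).left m)
    let w := fun m => ℛ k ((t i).right m)
    have hc := congrArg (auxPsi (r.left i)) (sum_tmul_tmul_eq (t i) u w)
    simp only [map_sum, auxPsi_tmul] at hc
    have lhs_eq : ∑ m ∈ (t i).index, ∑ l ∈ (u m).index,
        (antipode (R := k) ((u m).left l) * (u m).right l) ⊗ₜ[k]
          (antipode (R := k) (r.left i) * (t i).right m)
        = (1 : H) ⊗ₜ[k] (antipode (R := k) (r.left i) * r.right i) := by
      have : ∀ m ∈ (t i).index, ∑ l ∈ (u m).index,
          (antipode (R := k) ((u m).left l) * (u m).right l) ⊗ₜ[k]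
            (antipode (R := k) (r.left i) * (t i).right m)
          = (1 : H) ⊗ₜ[k] (counit (R := k) ((t i).left m) •
              (antipode (R := k) (r.left i) * (t i).right m)) := by
        intro m _
        rw [← TensorProduct.sum_tmul, sum_antipode_mul_eq_smul (u m),
          TensorProduct.smul_tmul]
      rw [Finset.sum_congr rfl this, ← TensorProduct.tmul_sum]
      congr 1
      calc ∑ m ∈ (t i).index, counit (R := k) ((t i).left m) •
            (antipode (R := k) (r.left i) * (t i).right m)
          = antipode (R := k) (r.left i) *
              ∑ m ∈ (t i).index, counit (R := k) ((t i).left m) • (t i).right m := by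
            rw [Finset.mul_sum]
            exact Finset.sum_congr rfl fun m _ => (mul_smul_comm _ _ _).symm
        _ = _ := by rw [_root_.sum_counit_smul (t i)]
    have rhs_eq : ∀ m ∈ (t i).index,
        auxXi (r.left i ⊗ₜ[k] ((t i).left m ⊗ₜ[k] (t i).right m))
        = ∑ l ∈ (w m).index,
            (antipode (R := k) ((t i).left m) * (w m).left l) ⊗ₜ[k]
              (antipode (R := k) (r.left i) * (w m).right l) := by
      intro m _
      rw [auxXi_tmul, ← (w m).eq, Finset.mul_sum]
      simp [Algebra.TensorProduct.tmul_mul_tmul]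
    rw [Finset.sum_congr rfl rhs_eq, ← hc, lhs_eq]
  rw [step1, step2, Finset.sum_congr rfl step3, ← TensorProduct.tmul_sum,
    sum_antipode_mul_eq_smul r, TensorProduct.tmul_smul,
    Algebra.TensorProduct.one_def]
/-- A representation of `comul 1`. -/
def oneRepr : Coalgebra.Repr k (1 : H) ℕ where
  index := ({0} : Finset ℕ)
  left _ := 1
  right _ := 1
  eq := by simp; exact Algebra.TensorProduct.one_def.symm

lemma antipode_one' : antipode (R := k) (1 : H) = 1 := by
  have h := sum_antipode_mul_eq_smul (oneRepr (k := k) (H := H))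
  simpa [oneRepr] using h

lemma claimB {κ₁ κ₂ : Type*} (y a b c : H) (ry : Coalgebra.Repr k y κ₁)
    (sy : ∀ i, Coalgebra.Repr k (ry.left i) κ₂) :
    ∑ m ∈ ry.index, ∑ n ∈ (sy m).index,
      antipode (R := k) (a * (sy m).left n) *
        (b * (((sy m).right n * antipode (R := k) (ry.right m)) * c))
    = antipode (R := k) (a * y) * (b * c) := by
  classical
  let ty := fun m => ℛ k (ry.right m)
  let F : H ⊗[k] (H ⊗[k] H) →ₗ[k] H :=
    LinearMap.mul' k H ∘ₗ TensorProduct.map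
      ((antipode (R := k)) ∘ₗ LinearMap.mulLeft k a)
      (LinearMap.mulLeft k b ∘ₗ LinearMap.mulRight k c ∘ₗ LinearMap.mul' k H ∘ₗ
        (antipode (R := k)).lTensor H)
  have hF : ∀ p q d : H, F (p ⊗ₜ[k] (q ⊗ₜ[k] d)) =
      antipode (R := k) (a * p) * (b * ((q * antipode (R := k) d) * c)) := by
    intro p q d; simp [F, mul_assoc]
  have hc := congrArg F (sum_tmul_tmul_eq ry sy ty)
  simp only [map_sum, hF] at hc
  calc ∑ m ∈ ry.index, ∑ n ∈ (sy m).index,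
        antipode (R := k) (a * (sy m).left n) *
          (b * (((sy m).right n * antipode (R := k) (ry.right m)) * c))
      = ∑ m ∈ ry.index, ∑ kk ∈ (ty m).index,
          antipode (R := k) (a * ry.left m) *
            (b * (((ty m).left kk * antipode (R := k) ((ty m).right kk)) * c)) := hc
    _ = ∑ m ∈ ry.index, counit (R := k) (ry.right m) •
          (antipode (R := k) (a * ry.left m) * (b * c)) := by
        refine Finset.sum_congr rfl fun m _ => ?_
        have : ∑ kk ∈ (ty m).index,
            (ty m).left kk * antipode (R := k) ((ty m).right kk)
            = counit (R := k) (ry.right m) • 1 := sum_mul_antipode_eq_smul (ty m)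
        rw [← Finset.mul_sum, ← Finset.mul_sum, ← Finset.sum_mul, this]
        simp [smul_mul_assoc, mul_smul_comm]
    _ = antipode (R := k) (a * y) * (b * c) := by
        have : ∀ m ∈ ry.index, counit (R := k) (ry.right m) •
            (antipode (R := k) (a * ry.left m) * (b * c))
            = antipode (R := k) (a * (counit (R := k) (ry.right m) • ry.left m)) * (b * c) := by
          intro m _; simp [smul_mul_assoc, mul_smul_comm]
        rw [Finset.sum_congr rfl this, ← Finset.sum_mul, ← map_sum, ← Finset.mul_sum,
          sum_smul_counit ry]

lemma antipode_mul' (x y : H) :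
    antipode (R := k) (x * y) = antipode (R := k) y * antipode (R := k) x := by
  classical
  let rx := ℛ k x
  let sx := fun i => ℛ k (rx.left i)
  let tx := fun i => ℛ k (rx.right i)
  let ry := ℛ k y
  let sy := fun m => ℛ k (ry.left m)
  -- claim A : S(x*y) = I₂
  let G : H ⊗[k] (H ⊗[k] H) →ₗ[k] H :=
    LinearMap.mul' k H ∘ₗ TensorProduct.map
      ((antipode (R := k)) ∘ₗ LinearMap.mulRight k y)
      (LinearMap.mul' k H ∘ₗ (antipode (R := k)).lTensor H)
  have hG : ∀ p q d : H, G (p ⊗ₜ[k] (q ⊗ₜ[k] d)) =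
      antipode (R := k) (p * y) * (q * antipode (R := k) d) := by
    intro p q d; simp [G]
  have hcA := congrArg G (sum_tmul_tmul_eq rx sx tx)
  simp only [map_sum, hG] at hcA
  have claimA : antipode (R := k) (x * y) = ∑ i ∈ rx.index, ∑ j ∈ (sx i).index,
      antipode (R := k) ((sx i).left j * y) *
        ((sx i).right j * antipode (R := k) (rx.right i)) := by
    rw [hcA]
    symm
    calc ∑ i ∈ rx.index, ∑ kk ∈ (tx i).index,
          antipode (R := k) (rx.left i * y) *
            ((tx i).left kk * antipode (R := k) ((tx i).right kk))
        = ∑ i ∈ rx.index, counit (R := k) (rx.right i) •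
            antipode (R := k) (rx.left i * y) := by
          refine Finset.sum_congr rfl fun i _ => ?_
          rw [← Finset.mul_sum, sum_mul_antipode_eq_smul (tx i)]
          simp [mul_smul_comm]
      _ = antipode (R := k) (x * y) := by
          have : ∀ i ∈ rx.index, counit (R := k) (rx.right i) •
              antipode (R := k) (rx.left i * y)
              = antipode (R := k) ((counit (R := k) (rx.right i) • rx.left i) * y) := by
            intro i _; simp [smul_mul_assoc]
          rw [Finset.sum_congr rfl this, ← map_sum, ← Finset.sum_mul, sum_smul_counit rx]
  -- claim B : I₂ = I₃ (insert the y-expansion)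
  have claimB' : ∀ i ∈ rx.index, ∀ j ∈ (sx i).index,
      antipode (R := k) ((sx i).left j * y) *
        ((sx i).right j * antipode (R := k) (rx.right i))
      = ∑ m ∈ ry.index, ∑ n ∈ (sy m).index,
          antipode (R := k) ((sx i).left j * (sy m).left n) *
            ((sx i).right j * (((sy m).right n * antipode (R := k) (ry.right m)) *
              antipode (R := k) (rx.right i))) := by
    intro i _ j _
    exact (claimB y ((sx i).left j) ((sx i).right j) (antipode (R := k) (rx.right i)) ry sy).symm
  -- claim C : I₃ = S y * S x
  have claimC : ∑ i ∈ rx.index, ∑ j ∈ (sx i).index, ∑ m ∈ ry.index, ∑ n ∈ (sy m).index,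
      antipode (R := k) ((sx i).left j * (sy m).left n) *
        ((sx i).right j * (((sy m).right n * antipode (R := k) (ry.right m)) *
          antipode (R := k) (rx.right i)))
      = antipode (R := k) y * antipode (R := k) x := by
    have reassoc : ∀ i j m n,
        antipode (R := k) ((sx i).left j * (sy m).left n) *
          ((sx i).right j * (((sy m).right n * antipode (R := k) (ry.right m)) *
            antipode (R := k) (rx.right i)))
        = (antipode (R := k) ((sx i).left j * (sy m).left n) *
            ((sx i).right j * (sy m).right n)) *
          (antipode (R := k) (ry.right m) * antipode (R := k) (rx.right i)) := by
      intro i j m n; simp only [mul_assoc]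
    simp only [reassoc]
    calc ∑ i ∈ rx.index, ∑ j ∈ (sx i).index, ∑ m ∈ ry.index, ∑ n ∈ (sy m).index,
        (antipode (R := k) ((sx i).left j * (sy m).left n) *
            ((sx i).right j * (sy m).right n)) *
          (antipode (R := k) (ry.right m) * antipode (R := k) (rx.right i))
        = ∑ i ∈ rx.index, ∑ m ∈ ry.index, ∑ j ∈ (sx i).index, ∑ n ∈ (sy m).index,
          (antipode (R := k) ((sx i).left j * (sy m).left n) *
            ((sx i).right j * (sy m).right n)) *
          (antipode (R := k) (ry.right m) * antipode (R := k) (rx.right i)) := by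
          refine Finset.sum_congr rfl fun i _ => ?_
          exact Finset.sum_comm
      _ = ∑ i ∈ rx.index, ∑ m ∈ ry.index,
            (counit (R := k) (rx.left i) * counit (R := k) (ry.left m)) •
            (antipode (R := k) (ry.right m) * antipode (R := k) (rx.right i)) := by
          refine Finset.sum_congr rfl fun i _ => Finset.sum_congr rfl fun m _ => ?_
          have hp := sum_antipode_mul_eq_smul (prodRepr (sx i) (sy m))
          simp only [prodRepr] at hp
          rw [Finset.sum_product] at hp
          simp only [← Finset.sum_mul]
          rw [show ∑ j ∈ (sx i).index, ∑ n ∈ (sy m).index,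
              antipode (R := k) ((sx i).left j * (sy m).left n) *
                ((sx i).right j * (sy m).right n)
              = counit (R := k) (rx.left i * ry.left m) • 1 from hp]
          rw [Bialgebra.counit_mul]
          simp [smul_mul_assoc]
      _ = antipode (R := k) y * antipode (R := k) x := by
          have : ∀ i ∈ rx.index, ∑ m ∈ ry.index,
              (counit (R := k) (rx.left i) * counit (R := k) (ry.left m)) •
              (antipode (R := k) (ry.right m) * antipode (R := k) (rx.right i))
              = counit (R := k) (rx.left i) •
                  (antipode (R := k) y * antipode (R := k) (rx.right i)) := by
            intro i _
            have hterm : ∀ m ∈ ry.index,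
                (counit (R := k) (rx.left i) * counit (R := k) (ry.left m)) •
                (antipode (R := k) (ry.right m) * antipode (R := k) (rx.right i))
                = counit (R := k) (rx.left i) •
                  ((antipode (R := k) ((counit (R := k) (ry.left m)) • ry.right m)) *
                    antipode (R := k) (rx.right i)) := by
              intro m _; rw [mul_smul]; simp [smul_mul_assoc]
            rw [Finset.sum_congr rfl hterm, ← Finset.smul_sum, ← Finset.sum_mul, ← map_sum,
              _root_.sum_counit_smul ry]
          rw [Finset.sum_congr rfl this]
          have : ∀ i ∈ rx.index, counit (R := k) (rx.left i) •
              (antipode (R := k) y * antipode (R := k) (rx.right i))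
              = antipode (R := k) y *
                  antipode (R := k) (counit (R := k) (rx.left i) • rx.right i) := by
            intro i _; simp [mul_smul_comm]
          rw [Finset.sum_congr rfl this, ← Finset.mul_sum, ← map_sum, _root_.sum_counit_smul rx]
  calc antipode (R := k) (x * y)
      = _ := claimA
    _ = _ := by
        refine Finset.sum_congr rfl fun i hi => Finset.sum_congr rfl fun j hj => ?_
        exact claimB' i hi j hj
    _ = antipode (R := k) y * antipode (R := k) x := claimC
lemma comul_antipode' (x : H) :
    comul (R := k) (antipode (R := k) x) = Gmap x := by
  classical
  let rx := ℛ k x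
  let sx := fun i => ℛ k (rx.left i)
  let tx := fun i => ℛ k (rx.right i)
  let Θ : H ⊗[k] (H ⊗[k] H) →ₗ[k] H ⊗[k] H :=
    LinearMap.mul' k (H ⊗[k] H) ∘ₗ TensorProduct.map Gmap
      (LinearMap.mul' k (H ⊗[k] H) ∘ₗ TensorProduct.map comul
        (comul ∘ₗ antipode (R := k)))
  have hΘ : ∀ a b c : H, Θ (a ⊗ₜ[k] (b ⊗ₜ[k] c)) =
      Gmap a * (comul (R := k) b * comul (R := k) (antipode (R := k) c)) := by
    intro a b c; simp [Θ]
  have hc := congrArg Θ (sum_tmul_tmul_eq rx sx tx)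
  simp only [map_sum, hΘ] at hc
  -- right-hand side of hc is `Gmap x`
  have right_eq : ∑ i ∈ rx.index, ∑ kk ∈ (tx i).index,
      Gmap (rx.left i) * (comul (R := k) ((tx i).left kk) *
        comul (R := k) (antipode (R := k) ((tx i).right kk)))
      = Gmap x := by
    have : ∀ i ∈ rx.index, ∑ kk ∈ (tx i).index,
        Gmap (rx.left i) * (comul (R := k) ((tx i).left kk) *
          comul (R := k) (antipode (R := k) ((tx i).right kk)))
        = counit (R := k) (rx.right i) • Gmap (rx.left i) := by
      intro i _
      have hsum : ∑ kk ∈ (tx i).index, comul (R := k) ((tx i).left kk) *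
          comul (R := k) (antipode (R := k) ((tx i).right kk))
          = counit (R := k) (rx.right i) • 1 := by
        have : ∀ kk ∈ (tx i).index, comul (R := k) ((tx i).left kk) *
            comul (R := k) (antipode (R := k) ((tx i).right kk))
            = comul (R := k) ((tx i).left kk * antipode (R := k) ((tx i).right kk)) := by
          intro kk _; rw [Bialgebra.comul_mul]
        rw [Finset.sum_congr rfl this, ← map_sum, sum_mul_antipode_eq_smul (tx i), map_smul,
          Bialgebra.comul_one]
      rw [← Finset.mul_sum, hsum, mul_smul_comm, mul_one]
    rw [Finset.sum_congr rfl this]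
    have : ∀ i ∈ rx.index, counit (R := k) (rx.right i) • Gmap (rx.left i)
        = Gmap (k := k) (counit (R := k) (rx.right i) • rx.left i) := by
      intro i _; rw [map_smul]
    rw [Finset.sum_congr rfl this, ← map_sum, sum_smul_counit rx]
  -- left-hand side of hc is `comul (antipode x)`
  have left_eq : ∑ i ∈ rx.index, ∑ j ∈ (sx i).index,
      Gmap ((sx i).left j) * (comul (R := k) ((sx i).right j) *
        comul (R := k) (antipode (R := k) (rx.right i)))
      = comul (R := k) (antipode (R := k) x) := by
    have : ∀ i ∈ rx.index, ∑ j ∈ (sx i).index,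
        Gmap ((sx i).left j) * (comul (R := k) ((sx i).right j) *
          comul (R := k) (antipode (R := k) (rx.right i)))
        = counit (R := k) (rx.left i) • comul (R := k) (antipode (R := k) (rx.right i)) := by
      intro i _
      have assoc : ∀ j ∈ (sx i).index,
          Gmap ((sx i).left j) * (comul (R := k) ((sx i).right j) *
            comul (R := k) (antipode (R := k) (rx.right i)))
          = (Gmap ((sx i).left j) * comul (R := k) ((sx i).right j)) *
            comul (R := k) (antipode (R := k) (rx.right i)) := by
        intro j _; rw [mul_assoc]
      rw [Finset.sum_congr rfl assoc, ← Finset.sum_mul, sum_Gmap_mul_comul (sx i),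
        smul_mul_assoc, one_mul]
    rw [Finset.sum_congr rfl this]
    have : ∀ i ∈ rx.index, counit (R := k) (rx.left i) •
        comul (R := k) (antipode (R := k) (rx.right i))
        = comul (R := k) (antipode (R := k) (counit (R := k) (rx.left i) • rx.right i)) := by
      intro i _; rw [map_smul, map_smul]
    rw [Finset.sum_congr rfl this, ← map_sum, ← map_sum, _root_.sum_counit_smul rx]
  rw [← left_eq, hc, right_eq]

/-- A representation of `comul (antipode x)` built from one of `comul x`. -/
def antipodeRepr {x : H} {κ₁ : Type*} (r : Coalgebra.Repr k x κ₁) :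
    Coalgebra.Repr k (antipode (R := k) x) κ₁ where
  index := r.index
  left i := antipode (R := k) (r.right i)
  right i := antipode (R := k) (r.left i)
  eq := by rw [comul_antipode', Gmap_repr r]

section Sinv

variable (Sinv : H →ₗ[k] H)
  (hS1 : Sinv ∘ₗ HopfAlgebra.antipode (R := k) = LinearMap.id)
  (hS2 : HopfAlgebra.antipode (R := k) ∘ₗ Sinv = LinearMap.id)

include hS1 hS2

lemma Sinv_antipode (a : H) : Sinv (antipode (R := k) a) = a := LinearMap.congr_fun hS1 a

lemma antipode_Sinv (a : H) : antipode (R := k) (Sinv a) = a := LinearMap.congr_fun hS2 a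

lemma Sinv_one : Sinv (1 : H) = 1 := by
  have := Sinv_antipode Sinv hS1 hS2 (1 : H)
  rwa [antipode_one'] at this

lemma Sinv_mul (a b : H) : Sinv (a * b) = Sinv b * Sinv a := by
  have h : antipode (R := k) (Sinv b * Sinv a) = a * b := by
    rw [antipode_mul', antipode_Sinv Sinv hS1 hS2, antipode_Sinv Sinv hS1 hS2]
  calc Sinv (a * b) = Sinv (antipode (R := k) (Sinv b * Sinv a)) := by rw [h]
    _ = Sinv b * Sinv a := Sinv_antipode Sinv hS1 hS2 _

lemma sum_mul_Sinv {x : H} {κ₁ : Type*} (r : Coalgebra.Repr k x κ₁) :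
    ∑ i ∈ r.index, r.right i * Sinv (r.left i) = counit (R := k) x • 1 := by
  have hS : antipode (R := k) (∑ i ∈ r.index, r.right i * Sinv (r.left i))
      = counit (R := k) x • 1 := by
    rw [map_sum]
    have : ∀ i ∈ r.index, antipode (R := k) (r.right i * Sinv (r.left i))
        = r.left i * antipode (R := k) (r.right i) := by
      intro i _; rw [antipode_mul', antipode_Sinv Sinv hS1 hS2]
    rw [Finset.sum_congr rfl this, sum_mul_antipode_eq_smul r]
  calc ∑ i ∈ r.index, r.right i * Sinv (r.left i)
      = Sinv (antipode (R := k) (∑ i ∈ r.index, r.right i * Sinv (r.left i))) :=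
        (Sinv_antipode Sinv hS1 hS2 _).symm
    _ = Sinv (counit (R := k) x • 1) := by rw [hS]
    _ = counit (R := k) x • 1 := by rw [map_smul, Sinv_one Sinv hS1 hS2]

lemma sum_Sinv_mul {x : H} {κ₁ : Type*} (r : Coalgebra.Repr k x κ₁) :
    ∑ i ∈ r.index, Sinv (r.right i) * r.left i = counit (R := k) x • 1 := by
  have hS : antipode (R := k) (∑ i ∈ r.index, Sinv (r.right i) * r.left i)
      = counit (R := k) x • 1 := by
    rw [map_sum]
    have : ∀ i ∈ r.index, antipode (R := k) (Sinv (r.right i) * r.left i)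
        = antipode (R := k) (r.left i) * r.right i := by
      intro i _; rw [antipode_mul', antipode_Sinv Sinv hS1 hS2]
    rw [Finset.sum_congr rfl this, sum_antipode_mul_eq_smul r]
  calc ∑ i ∈ r.index, Sinv (r.right i) * r.left i
      = Sinv (antipode (R := k) (∑ i ∈ r.index, Sinv (r.right i) * r.left i)) :=
        (Sinv_antipode Sinv hS1 hS2 _).symm
    _ = Sinv (counit (R := k) x • 1) := by rw [hS]
    _ = counit (R := k) x • 1 := by rw [map_smul, Sinv_one Sinv hS1 hS2]

end Sinv
-- ### convolution lemmas
lemma conv_repr (f g : H →ₗ[k] k) {y : H} {κ₁ : Type*} (r : Coalgebra.Repr k y κ₁) :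
    conv f g y = ∑ i ∈ r.index, f (r.left i) * g (r.right i) := by
  rw [conv]
  simp only [LinearMap.comp_apply, ← r.eq, map_sum]
  simp

lemma conv_assoc (f g h : H →ₗ[k] k) : conv (conv f g) h = conv f (conv g h) := by
  ext y
  classical
  let r := ℛ k y
  let s := fun i => ℛ k (r.left i)
  let t := fun i => ℛ k (r.right i)
  let Tri : H ⊗[k] (H ⊗[k] H) →ₗ[k] k :=
    LinearMap.mul' k k ∘ₗ TensorProduct.map f (LinearMap.mul' k k ∘ₗ TensorProduct.map g h)
  have hTri : ∀ a b c : H, Tri (a ⊗ₜ[k] (b ⊗ₜ[k] c)) = f a * (g b * h c) := by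
    intro a b c; simp [Tri]
  have hc := congrArg Tri (sum_tmul_tmul_eq r s t)
  simp only [map_sum, hTri] at hc
  calc conv (conv f g) h y
      = ∑ i ∈ r.index, conv f g (r.left i) * h (r.right i) := conv_repr _ _ r
    _ = ∑ i ∈ r.index, ∑ j ∈ (s i).index,
          f ((s i).left j) * (g ((s i).right j) * h (r.right i)) := by
        refine Finset.sum_congr rfl fun i _ => ?_
        rw [conv_repr _ _ (s i), Finset.sum_mul]
        simp [mul_assoc]
    _ = ∑ i ∈ r.index, ∑ j ∈ (t i).index,
          f (r.left i) * (g ((t i).left j) * h ((t i).right j)) := hc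
    _ = ∑ i ∈ r.index, f (r.left i) * conv g h (r.right i) := by
        refine Finset.sum_congr rfl fun i _ => ?_
        rw [conv_repr _ _ (t i), Finset.mul_sum]
    _ = conv f (conv g h) y := (conv_repr _ _ r).symm

lemma conv_counit (f : H →ₗ[k] k) : conv f (Coalgebra.counit) = f := by
  ext y
  let r := ℛ k y
  rw [conv_repr _ _ r]
  have : ∀ i ∈ r.index, f (r.left i) * counit (R := k) (r.right i)
      = f (counit (R := k) (r.right i) • r.left i) := by
    intro i _; rw [map_smul, smul_eq_mul, mul_comm]
  rw [Finset.sum_congr rfl this, ← map_sum, sum_smul_counit r]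

lemma convL_apply (f g : H →ₗ[k] k) : convL f g = conv f g := rfl

-- ### component machinery for V ⊗ H*
/-- `i`-th component of an element of `V ⊗ W` w.r.t. the basis `b`. -/
def comp (b : Module.Basis ι k V) (i : ι) : V ⊗[k] (H →ₗ[k] k) →ₗ[k] (H →ₗ[k] k) :=
  (TensorProduct.lid k (H →ₗ[k] k)).toLinearMap ∘ₗ (b.coord i).rTensor (H →ₗ[k] k)

@[simp] lemma comp_tmul (b : Module.Basis ι k V) (i : ι) (v : V) (f : H →ₗ[k] k) :
    comp b i (v ⊗ₜ[k] f) = b.repr v i • f := by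
  simp [comp]

lemma sum_comp (b : Module.Basis ι k V) (η : V ⊗[k] (H →ₗ[k] k)) :
    ∑ i : ι, b i ⊗ₜ[k] comp b i η = η := by
  induction η using TensorProduct.induction_on with
  | zero => simp
  | tmul v f =>
      simp only [comp_tmul]
      calc ∑ i : ι, b i ⊗ₜ[k] (b.repr v i • f)
          = ∑ i : ι, (b.repr v i • b i) ⊗ₜ[k] f := by
            refine Finset.sum_congr rfl fun i _ => ?_
            rw [TensorProduct.smul_tmul]
        _ = v ⊗ₜ[k] f := by rw [← TensorProduct.sum_tmul, Module.Basis.sum_repr]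
  | add η₁ η₂ h1 h2 =>
      simp only [map_add, TensorProduct.tmul_add, Finset.sum_add_distrib, h1, h2]

lemma comp_map_id (b : Module.Basis ι k V) (i : ι) (T : (H →ₗ[k] k) →ₗ[k] (H →ₗ[k] k))
    (η : V ⊗[k] (H →ₗ[k] k)) :
    comp b i (TensorProduct.map LinearMap.id T η) = T (comp b i η) := by
  induction η using TensorProduct.induction_on with
  | zero => simp
  | tmul v f => simp
  | add η₁ η₂ h1 h2 => simp [map_add, h1, h2]

-- ### matrix coefficient lemmas
lemma coeffL_apply (b : Module.Basis ι k V) (i : ι) (v : V) (x : H) :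
    coeffL b i v x = b.repr (x • v) i := rfl

lemma coeffL_smulH (b : Module.Basis ι k V) (j : ι) (x : H) (v : V) :
    coeffL b j (x • v) = coeffL b j v ∘ₗ LinearMap.mulRight k x := by
  ext y
  simp only [coeffL_apply, LinearMap.comp_apply, LinearMap.mulRight_apply]
  rw [← mul_smul]

lemma repr_mul_smul (b : Module.Basis ι k V) (z x : H) (v : V) (j : ι) :
    b.repr ((z * x) • v) j = ∑ i : ι, b.repr (x • v) i * b.repr (z • b i) j := by
  rw [mul_smul]
  conv_lhs => rw [← Module.Basis.sum_repr b (x • v)]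
  rw [Finset.smul_sum, map_sum]
  have : ∀ i : ι, z • b.repr (x • v) i • b i = b.repr (x • v) i • (z • b i) := fun i =>
    (smul_comm _ _ _).symm
  simp only [this, map_smul]
  rw [Finsupp.coe_finset_sum, Finset.sum_apply]
  simp [mul_comm]

-- ### kap expansion
lemma kap_tmul (b : Module.Basis ι k V) (Sinv : H →ₗ[k] H) (v : V) (f : H →ₗ[k] k) :
    kap b Sinv (v ⊗ₜ[k] f)
      = ∑ i : ι, b i ⊗ₜ[k] conv f (coeffL b i v ∘ₗ Sinv) := by
  simp only [kap, coact, LinearMap.comp_apply, TensorProduct.map_tmul, LinearMap.id_apply,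
    LinearMap.coe_sum, Finset.sum_apply, TensorProduct.sum_tmul, map_sum,
    LinearEquiv.coe_coe]
  refine Finset.sum_congr rfl fun i _ => ?_
  simp [convBilS, TensorProduct.mk_apply]

-- ### the two key contraction identities
lemma K1 (b : Module.Basis ι k V) (Sinv : H →ₗ[k] H)
    (hS1 : Sinv ∘ₗ HopfAlgebra.antipode (R := k) = LinearMap.id)
    (hS2 : HopfAlgebra.antipode (R := k) ∘ₗ Sinv = LinearMap.id) (v : V) (j : ι) :
    ∑ i : ι, conv (coeffL b i v ∘ₗ Sinv) (coeffL b j (b i)) = b.repr v j • counit := by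
  ext y
  let r := ℛ k y
  simp only [LinearMap.coe_sum, Finset.sum_apply, LinearMap.smul_apply]
  calc ∑ i : ι, conv (coeffL b i v ∘ₗ Sinv) (coeffL b j (b i)) y
      = ∑ i : ι, ∑ p ∈ r.index,
          b.repr (Sinv (r.left p) • v) i * b.repr (r.right p • b i) j := by
        refine Finset.sum_congr rfl fun i _ => ?_
        rw [conv_repr _ _ r]
        rfl
    _ = ∑ p ∈ r.index, ∑ i : ι,
          b.repr (Sinv (r.left p) • v) i * b.repr (r.right p • b i) j :=
        Finset.sum_comm
    _ = ∑ p ∈ r.index, b.repr ((r.right p * Sinv (r.left p)) • v) j := by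
        refine Finset.sum_congr rfl fun p _ => ?_
        rw [repr_mul_smul]
    _ = b.repr ((counit (R := k) y • (1 : H)) • v) j := by
        rw [← sum_mul_Sinv Sinv hS1 hS2 r]
        rw [show ((∑ p ∈ r.index, r.right p * Sinv (r.left p)) • v)
          = ∑ p ∈ r.index, (r.right p * Sinv (r.left p)) • v from Finset.sum_smul]
        rw [map_sum, Finsupp.coe_finset_sum, Finset.sum_apply]
    _ = b.repr v j • counit (R := k) y := by
        rw [smul_assoc, one_smul, map_smul]
        simp [mul_comm]

lemma K2 (b : Module.Basis ι k V) (Sinv : H →ₗ[k] H)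
    (hS1 : Sinv ∘ₗ HopfAlgebra.antipode (R := k) = LinearMap.id)
    (hS2 : HopfAlgebra.antipode (R := k) ∘ₗ Sinv = LinearMap.id) (v : V) (j : ι) :
    ∑ i : ι, conv (coeffL b i v) (coeffL b j (b i) ∘ₗ Sinv) = b.repr v j • counit := by
  ext y
  let r := ℛ k y
  simp only [LinearMap.coe_sum, Finset.sum_apply, LinearMap.smul_apply]
  calc ∑ i : ι, conv (coeffL b i v) (coeffL b j (b i) ∘ₗ Sinv) y
      = ∑ i : ι, ∑ p ∈ r.index,
          b.repr (r.left p • v) i * b.repr (Sinv (r.right p) • b i) j := by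
        refine Finset.sum_congr rfl fun i _ => ?_
        rw [conv_repr _ _ r]
        rfl
    _ = ∑ p ∈ r.index, ∑ i : ι,
          b.repr (r.left p • v) i * b.repr (Sinv (r.right p) • b i) j :=
        Finset.sum_comm
    _ = ∑ p ∈ r.index, b.repr ((Sinv (r.right p) * r.left p) • v) j := by
        refine Finset.sum_congr rfl fun p _ => ?_
        rw [repr_mul_smul]
    _ = b.repr ((counit (R := k) y • (1 : H)) • v) j := by
        rw [← sum_Sinv_mul Sinv hS1 hS2 r]
        rw [show ((∑ p ∈ r.index, Sinv (r.right p) * r.left p) • v)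
          = ∑ p ∈ r.index, (Sinv (r.right p) * r.left p) • v from Finset.sum_smul]
        rw [map_sum, Finsupp.coe_finset_sum, Finset.sum_apply]
    _ = b.repr v j • counit (R := k) y := by
        rw [smul_assoc, one_smul, map_smul]
        simp [mul_comm]

lemma conv_sum_right {γ : Type*} (f : H →ₗ[k] k) (F : Finset γ) (g : γ → (H →ₗ[k] k)) :
    conv f (∑ i ∈ F, g i) = ∑ i ∈ F, conv f (g i) :=
  map_sum (convL f) g F

lemma sum_repr_tmul (b : Module.Basis ι k V) (v : V) (f : H →ₗ[k] k) :
    ∑ j : ι, b j ⊗ₜ[k] (b.repr v j • f) = v ⊗ₜ[k] f := by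
  calc ∑ j : ι, b j ⊗ₜ[k] (b.repr v j • f)
      = ∑ j : ι, (b.repr v j • b j) ⊗ₜ[k] f := by
        refine Finset.sum_congr rfl fun j _ => ?_
        rw [TensorProduct.smul_tmul]
    _ = v ⊗ₜ[k] f := by rw [← TensorProduct.sum_tmul, Module.Basis.sum_repr]

section Inverses

variable (b : Module.Basis ι k V) (Sinv : H →ₗ[k] H)
  (hS1 : Sinv ∘ₗ HopfAlgebra.antipode (R := k) = LinearMap.id)
  (hS2 : HopfAlgebra.antipode (R := k) ∘ₗ Sinv = LinearMap.id)

include hS1 hS2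

lemma nu_kap (ζ : V ⊗[k] (H →ₗ[k] k)) :
    kap b LinearMap.id (kap b Sinv ζ) = ζ := by
  induction ζ using TensorProduct.induction_on with
  | zero => simp
  | add η₁ η₂ h1 h2 => simp [map_add, h1, h2]
  | tmul v f =>
    rw [kap_tmul, map_sum]
    calc ∑ i : ι, kap b LinearMap.id (b i ⊗ₜ[k] conv f (coeffL b i v ∘ₗ Sinv))
        = ∑ i : ι, ∑ j : ι,
            b j ⊗ₜ[k] conv (conv f (coeffL b i v ∘ₗ Sinv)) (coeffL b j (b i)) := by
          refine Finset.sum_congr rfl fun i _ => ?_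
          rw [kap_tmul]
          simp [LinearMap.comp_id]
      _ = ∑ j : ι, b j ⊗ₜ[k]
            conv f (∑ i : ι, conv (coeffL b i v ∘ₗ Sinv) (coeffL b j (b i))) := by
          rw [Finset.sum_comm]
          refine Finset.sum_congr rfl fun j _ => ?_
          rw [conv_sum_right, TensorProduct.tmul_sum]
          exact Finset.sum_congr rfl fun i _ => by rw [conv_assoc]
      _ = ∑ j : ι, b j ⊗ₜ[k] (b.repr v j • f) := by
          refine Finset.sum_congr rfl fun j _ => ?_
          rw [K1 b Sinv hS1 hS2 v j, conv_smul_right, conv_counit]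
      _ = v ⊗ₜ[k] f := sum_repr_tmul b v f

lemma kap_nu (ζ : V ⊗[k] (H →ₗ[k] k)) :
    kap b Sinv (kap b LinearMap.id ζ) = ζ := by
  induction ζ using TensorProduct.induction_on with
  | zero => simp
  | add η₁ η₂ h1 h2 => simp [map_add, h1, h2]
  | tmul v f =>
    rw [kap_tmul, map_sum]
    calc ∑ i : ι, kap b Sinv (b i ⊗ₜ[k] conv f (coeffL b i v ∘ₗ LinearMap.id))
        = ∑ i : ι, ∑ j : ι,
            b j ⊗ₜ[k] conv (conv f (coeffL b i v)) (coeffL b j (b i) ∘ₗ Sinv) := by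
          refine Finset.sum_congr rfl fun i _ => ?_
          rw [LinearMap.comp_id, kap_tmul]
      _ = ∑ j : ι, b j ⊗ₜ[k]
            conv f (∑ i : ι, conv (coeffL b i v) (coeffL b j (b i) ∘ₗ Sinv)) := by
          rw [Finset.sum_comm]
          refine Finset.sum_congr rfl fun j _ => ?_
          rw [conv_sum_right, TensorProduct.tmul_sum]
          exact Finset.sum_congr rfl fun i _ => by rw [conv_assoc]
      _ = ∑ j : ι, b j ⊗ₜ[k] (b.repr v j • f) := by
          refine Finset.sum_congr rfl fun j _ => ?_
          rw [K2 b Sinv hS1 hS2 v j, conv_smul_right, conv_counit]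
      _ = v ⊗ₜ[k] f := sum_repr_tmul b v f

end Inverses

lemma kap_convL (b : Module.Basis ι k V) (Sinv : H →ₗ[k] H) (f : H →ₗ[k] k)
    (ζ : V ⊗[k] (H →ₗ[k] k)) :
    kap b Sinv (TensorProduct.map LinearMap.id (convL f) ζ)
      = TensorProduct.map LinearMap.id (convL f) (kap b Sinv ζ) := by
  induction ζ using TensorProduct.induction_on with
  | zero => simp
  | add η₁ η₂ h1 h2 => simp [map_add, h1, h2]
  | tmul v g =>
    rw [TensorProduct.map_tmul, LinearMap.id_apply, kap_tmul, kap_tmul, map_sum]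
    refine Finset.sum_congr rfl fun i _ => ?_
    rw [TensorProduct.map_tmul, LinearMap.id_apply]
    congr 1
    rw [convL_apply, convL_apply, conv_assoc]

-- ### linearity of `actV` and `Ltrans` in the algebra element
@[simp] lemma actV_apply (x : H) (v : V) : actV (k := k) x v = x • v := rfl

lemma actV_add (x y : H) : actV (k := k) (V := V) (x + y) = actV x + actV y := by
  ext v; simp [actV, add_smul]

lemma actV_smulk (c : k) (x : H) : actV (k := k) (V := V) (c • x) = c • actV x := by
  ext v; simp [actV, smul_assoc]

lemma actV_mul (x y : H) : actV (k := k) (V := V) (x * y) = actV x ∘ₗ actV y := by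
  ext v; simp [actV, mul_smul]

lemma actV_one : actV (k := k) (V := V) (1 : H) = LinearMap.id := by
  ext v; simp [actV]

lemma Ltrans_apply (x : H) (f : H →ₗ[k] k) (y : H) :
    Ltrans x f y = f (HopfAlgebra.antipode (R := k) x * y) := rfl

lemma Ltrans_add (x y : H) : Ltrans (k := k) (H := H) (x + y) = Ltrans x + Ltrans y := by
  ext f z; simp [Ltrans_apply, map_add, add_mul]

lemma Ltrans_smulk (c : k) (x : H) : Ltrans (k := k) (H := H) (c • x) = c • Ltrans x := by
  ext f z; simp [Ltrans_apply, map_smul, smul_mul_assoc]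

lemma Ltrans_one : Ltrans (k := k) (H := H) (1 : H) = LinearMap.id := by
  ext f z; simp [Ltrans_apply, antipode_one']

/-- `bigMap ζ (x ⊗ h) = (actV x ⊗ Ltrans h) ζ`, as a linear map on `H ⊗ H`. -/
def bigMap (ζ : V ⊗[k] (H →ₗ[k] k)) : H ⊗[k] H →ₗ[k] V ⊗[k] (H →ₗ[k] k) :=
  TensorProduct.lift (LinearMap.mk₂ k
    (fun x h => TensorProduct.map (actV x) (Ltrans h) ζ)
    (fun x x' h => by rw [actV_add, TensorProduct.map_add_left, LinearMap.add_apply])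
    (fun c x h => by rw [actV_smulk, TensorProduct.map_smul_left, LinearMap.smul_apply])
    (fun x h h' => by rw [Ltrans_add, TensorProduct.map_add_right, LinearMap.add_apply])
    (fun c x h => by rw [Ltrans_smulk, TensorProduct.map_smul_right, LinearMap.smul_apply]))

@[simp] lemma bigMap_tmul (ζ : V ⊗[k] (H →ₗ[k] k)) (x h : H) :
    bigMap ζ (x ⊗ₜ[k] h) = TensorProduct.map (actV x) (Ltrans h) ζ := rfl

lemma bigMap_one_one (ζ : V ⊗[k] (H →ₗ[k] k)) : bigMap ζ ((1 : H) ⊗ₜ[k] (1 : H)) = ζ := by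
  rw [bigMap_tmul, actV_one, Ltrans_one, TensorProduct.map_id, LinearMap.id_apply]

lemma map_act_bigMap (ζ : V ⊗[k] (H →ₗ[k] k)) (a : H) (θ : H ⊗[k] H) :
    TensorProduct.map (actV a) LinearMap.id (bigMap ζ θ)
      = bigMap ζ ((LinearMap.mulLeft k a).rTensor H θ) := by
  induction θ using TensorProduct.induction_on with
  | zero => simp
  | add η₁ η₂ h1 h2 => simp only [map_add, h1, h2]
  | tmul x h =>
    rw [bigMap_tmul, LinearMap.rTensor_tmul, bigMap_tmul, LinearMap.mulLeft_apply,
      actV_mul, ← LinearMap.id_comp (Ltrans (k := k) h), TensorProduct.map_comp]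
    rfl

-- ### the tensor-level identity `Σ S(c₁)c₂ ⊗ c₃ = 1 ⊗ c`
lemma sum_rTensor_comul {c : H} {κ₁ : Type*} (rc : Coalgebra.Repr k c κ₁) :
    ∑ q ∈ rc.index, (LinearMap.mulLeft k (antipode (R := k) (rc.left q))).rTensor H
        (comul (R := k) (rc.right q))
      = (1 : H) ⊗ₜ[k] c := by
  classical
  let s := fun q => ℛ k (rc.left q)
  let t := fun q => ℛ k (rc.right q)
  let Q : H ⊗[k] (H ⊗[k] H) →ₗ[k] H ⊗[k] H :=
    ((LinearMap.mul' k H ∘ₗ (antipode (R := k)).rTensor H).rTensor H) ∘ₗ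
      (TensorProduct.assoc k H H H).symm.toLinearMap
  have hQ : ∀ a b d : H, Q (a ⊗ₜ[k] (b ⊗ₜ[k] d)) =
      (antipode (R := k) a * b) ⊗ₜ[k] d := by
    intro a b d; simp [Q]
  have hc := congrArg Q (sum_tmul_tmul_eq rc s t)
  simp only [map_sum, hQ] at hc
  calc ∑ q ∈ rc.index, (LinearMap.mulLeft k (antipode (R := k) (rc.left q))).rTensor H
        (comul (R := k) (rc.right q))
      = ∑ q ∈ rc.index, ∑ m ∈ (t q).index,
          (antipode (R := k) (rc.left q) * (t q).left m) ⊗ₜ[k] (t q).right m := by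
        refine Finset.sum_congr rfl fun q _ => ?_
        rw [← (t q).eq, map_sum]
        simp
    _ = ∑ q ∈ rc.index, ∑ j ∈ (s q).index,
          (antipode (R := k) ((s q).left j) * (s q).right j) ⊗ₜ[k] rc.right q := hc.symm
    _ = (1 : H) ⊗ₜ[k] c := by
        have : ∀ q ∈ rc.index, ∑ j ∈ (s q).index,
            (antipode (R := k) ((s q).left j) * (s q).right j) ⊗ₜ[k] rc.right q
            = (1 : H) ⊗ₜ[k] (counit (R := k) (rc.left q) • rc.right q) := by
          intro q _
          rw [← TensorProduct.sum_tmul, sum_antipode_mul_eq_smul (s q),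
            TensorProduct.smul_tmul]
        rw [Finset.sum_congr rfl this, ← TensorProduct.tmul_sum, _root_.sum_counit_smul rc]

-- ### the key intertwining identity (star)
lemma star_eq (b : Module.Basis ι k V) (Sinv : H →ₗ[k] H)
    (hS1 : Sinv ∘ₗ HopfAlgebra.antipode (R := k) = LinearMap.id)
    (hS2 : HopfAlgebra.antipode (R := k) ∘ₗ Sinv = LinearMap.id)
    {κ₁ : Type*} (c : H) (rc : Coalgebra.Repr k c κ₁) (ζ : V ⊗[k] (H →ₗ[k] k)) :
    TensorProduct.map LinearMap.id (Ltrans c) (kap b Sinv ζ)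
      = ∑ q ∈ rc.index,
          kap b Sinv (TensorProduct.map (actV (rc.left q)) (Ltrans (rc.right q)) ζ) := by
  induction ζ using TensorProduct.induction_on with
  | zero => simp
  | add η₁ η₂ h1 h2 => simp only [map_add, h1, h2, Finset.sum_add_distrib]
  | tmul v f =>
    rw [kap_tmul, map_sum]
    have rhs : ∀ q ∈ rc.index,
        kap b Sinv (TensorProduct.map (actV (rc.left q)) (Ltrans (rc.right q)) (v ⊗ₜ[k] f))
        = ∑ j : ι, b j ⊗ₜ[k]
            conv (Ltrans (rc.right q) f) (coeffL b j (rc.left q • v) ∘ₗ Sinv) := by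
      intro q _
      rw [TensorProduct.map_tmul, actV_apply, kap_tmul]
    rw [Finset.sum_congr rfl rhs, Finset.sum_comm]
    refine Finset.sum_congr rfl fun j _ => ?_
    rw [TensorProduct.map_tmul, LinearMap.id_apply, ← TensorProduct.tmul_sum]
    congr 1
    ext y
    let ry := ℛ k y
    have lhs_eval : Ltrans c (conv f (coeffL b j v ∘ₗ Sinv)) y
        = ∑ q ∈ rc.index, ∑ p ∈ ry.index,
            f (antipode (R := k) (rc.right q) * ry.left p) *
              coeffL b j v (Sinv (ry.right p) * rc.left q) := by
      rw [Ltrans_apply, conv_repr _ _ (prodRepr (antipodeRepr rc) ry)]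
      simp only [prodRepr, antipodeRepr]
      rw [Finset.sum_product]
      refine Finset.sum_congr rfl fun q _ => Finset.sum_congr rfl fun p _ => ?_
      congr 1
      simp only [LinearMap.comp_apply]
      rw [Sinv_mul Sinv hS1 hS2, Sinv_antipode Sinv hS1 hS2]
    rw [lhs_eval]
    simp only [LinearMap.coe_sum, Finset.sum_apply]
    refine Finset.sum_congr rfl fun q _ => ?_
    rw [conv_repr _ _ ry]
    refine Finset.sum_congr rfl fun p _ => ?_
    rw [Ltrans_apply]
    congr 1
    rw [coeffL_smulH]
    rfl

-- ### characterisation of the range of `id ⊗ (A^B).subtype`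
lemma mem_range_iff (B : Subalgebra k H) (b : Module.Basis ι k V) (η : V ⊗[k] (H →ₗ[k] k)) :
    η ∈ LinearMap.range (TensorProduct.map (LinearMap.id : V →ₗ[k] V) (ABsub B).subtype)
      ↔ ∀ c ∈ B, TensorProduct.map LinearMap.id (Ltrans c) η
          = Coalgebra.counit (R := k) c • η := by
  constructor
  · rintro ⟨ξ, rfl⟩ c hc
    have hcomp : Ltrans (k := k) c ∘ₗ (ABsub B).subtype
        = Coalgebra.counit (R := k) c • (ABsub B).subtype := by
      ext f y
      simp only [LinearMap.comp_apply, Submodule.coe_subtype, Ltrans_apply,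
        LinearMap.smul_apply]
      exact f.2 c hc y
    rw [← LinearMap.comp_apply, ← TensorProduct.map_comp, LinearMap.id_comp, hcomp,
      TensorProduct.map_smul_right, LinearMap.smul_apply]
  · intro hη
    have hmem : ∀ i : ι, comp b i η ∈ ABsub B := by
      intro i c hc y
      have h1 : comp b i (TensorProduct.map LinearMap.id (Ltrans c) η)
          = Ltrans c (comp b i η) := comp_map_id b i _ η
      rw [hη c hc, map_smul] at h1
      have := LinearMap.congr_fun h1.symm y
      simpa [Ltrans_apply, smul_eq_mul] using this
    refine ⟨∑ i : ι, b i ⊗ₜ[k] (⟨comp b i η, hmem i⟩ : ABsub B), ?_⟩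
    rw [map_sum]
    calc ∑ i : ι, TensorProduct.map LinearMap.id (ABsub B).subtype
          (b i ⊗ₜ[k] (⟨comp b i η, hmem i⟩ : ABsub B))
        = ∑ i : ι, b i ⊗ₜ[k] comp b i η := by
          refine Finset.sum_congr rfl fun i _ => ?_
          rw [TensorProduct.map_tmul]
          rfl
      _ = η := sum_comp b η

lemma map_split (f : V →ₗ[k] V) (g : (H →ₗ[k] k) →ₗ[k] (H →ₗ[k] k))
    (ζ : V ⊗[k] (H →ₗ[k] k)) :
    TensorProduct.map f g ζ
      = TensorProduct.map f LinearMap.id (TensorProduct.map LinearMap.id g ζ) := by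
  conv_rhs => rw [← LinearMap.comp_apply, ← TensorProduct.map_comp, LinearMap.comp_id,
    LinearMap.id_comp]

lemma map_merge (f f' : V →ₗ[k] V) (ζ : V ⊗[k] (H →ₗ[k] k)) :
    TensorProduct.map f LinearMap.id (TensorProduct.map f' LinearMap.id ζ)
      = TensorProduct.map (f ∘ₗ f') LinearMap.id ζ := by
  rw [← LinearMap.comp_apply, ← TensorProduct.map_comp, LinearMap.id_comp]

/-- A representation of `comul c` with components in `B`, from the hypothesis `hΔ`. -/
lemma exists_B_repr (B : Subalgebra k H)
    (hΔ : ∀ b ∈ B, (Coalgebra.comul b : H ⊗[k] H) ∈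
      LinearMap.range (TensorProduct.map B.val.toLinearMap B.val.toLinearMap))
    {c : H} (hc : c ∈ B) :
    ∃ F : Finset (B × B), ∑ p ∈ F, ((p.1 : H) ⊗ₜ[k] (p.2 : H)) = comul (R := k) c := by
  obtain ⟨θ, hθ⟩ := hΔ c hc
  obtain ⟨F, hF⟩ := TensorProduct.exists_finset (R := k) θ
  refine ⟨F, ?_⟩
  rw [← hθ, hF, map_sum]
  simp

lemma sxi_fwd (B : Subalgebra k H) (b : Module.Basis ι k V) (Sinv : H →ₗ[k] H)
    (hS1 : Sinv ∘ₗ HopfAlgebra.antipode (R := k) = LinearMap.id)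
    (hS2 : HopfAlgebra.antipode (R := k) ∘ₗ Sinv = LinearMap.id)
    (hΔ : ∀ b ∈ B, (Coalgebra.comul b : H ⊗[k] H) ∈
      LinearMap.range (TensorProduct.map B.val.toLinearMap B.val.toLinearMap))
    {ζ : V ⊗[k] (H →ₗ[k] k)} (hζ : ζ ∈ SXi B) :
    ∀ c ∈ B, TensorProduct.map LinearMap.id (Ltrans c) (kap b Sinv ζ)
      = Coalgebra.counit (R := k) c • kap b Sinv ζ := by
  intro c hc
  obtain ⟨F, hF⟩ := exists_B_repr B hΔ hc
  let rc : Coalgebra.Repr k c (B × B) := ⟨F, fun p => (p.1 : H), fun p => (p.2 : H), hF⟩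
  rw [star_eq b Sinv hS1 hS2 c rc ζ]
  have hterm : ∀ q ∈ rc.index,
      kap b Sinv (TensorProduct.map (actV (rc.left q)) (Ltrans (rc.right q)) ζ)
      = kap b Sinv (bigMap ζ ((rc.left q * antipode (R := k) (rc.right q)) ⊗ₜ[k] (1 : H))) := by
    intro q _
    congr 1
    rw [bigMap_tmul, Ltrans_one, map_split (actV (rc.left q)) (Ltrans (rc.right q)) ζ,
      hζ (rc.right q) q.2.2, map_merge, ← actV_mul]
  rw [Finset.sum_congr rfl hterm, ← map_sum, ← map_sum, ← TensorProduct.sum_tmul,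
    sum_mul_antipode_eq_smul rc, ← TensorProduct.smul_tmul', map_smul, map_smul,
    bigMap_one_one]

lemma sxi_bwd (B : Subalgebra k H) (b : Module.Basis ι k V) (Sinv : H →ₗ[k] H)
    (hS1 : Sinv ∘ₗ HopfAlgebra.antipode (R := k) = LinearMap.id)
    (hS2 : HopfAlgebra.antipode (R := k) ∘ₗ Sinv = LinearMap.id)
    (hΔ : ∀ b ∈ B, (Coalgebra.comul b : H ⊗[k] H) ∈
      LinearMap.range (TensorProduct.map B.val.toLinearMap B.val.toLinearMap))
    {ζ : V ⊗[k] (H →ₗ[k] k)}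
    (hP : ∀ c ∈ B, TensorProduct.map LinearMap.id (Ltrans c) (kap b Sinv ζ)
      = Coalgebra.counit (R := k) c • kap b Sinv ζ) :
    ζ ∈ SXi B := by
  intro c hc
  obtain ⟨F, hF⟩ := exists_B_repr B hΔ hc
  let rc : Coalgebra.Repr k c (B × B) := ⟨F, fun p => (p.1 : H), fun p => (p.2 : H), hF⟩
  have hq : ∀ q : B × B, bigMap ζ (comul (R := k) (q.2 : H))
      = Coalgebra.counit (R := k) (q.2 : H) • ζ := by
    intro q
    have hstar := star_eq b Sinv hS1 hS2 (q.2 : H) (ℛ k (q.2 : H)) ζ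
    have hr : ∑ r ∈ (ℛ k (q.2 : H)).index,
        kap b Sinv (TensorProduct.map (actV ((ℛ k (q.2 : H)).left r))
          (Ltrans ((ℛ k (q.2 : H)).right r)) ζ)
        = kap b Sinv (bigMap ζ (comul (R := k) (q.2 : H))) := by
      rw [← (ℛ k (q.2 : H)).eq, map_sum (bigMap ζ), map_sum (kap b Sinv)]
      rfl
    rw [hr, hP (q.2 : H) q.2.2, ← map_smul] at hstar
    have := congrArg (kap b LinearMap.id) hstar
    rw [nu_kap b Sinv hS1 hS2, nu_kap b Sinv hS1 hS2] at this
    exact this.symm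
  calc TensorProduct.map LinearMap.id (Ltrans c) ζ
      = bigMap ζ ((1 : H) ⊗ₜ[k] c) := by rw [bigMap_tmul, actV_one]
    _ = bigMap ζ (∑ q ∈ rc.index,
          (LinearMap.mulLeft k (antipode (R := k) (rc.left q))).rTensor H
            (comul (R := k) (rc.right q))) := by rw [sum_rTensor_comul rc]
    _ = ∑ q ∈ rc.index, TensorProduct.map (actV (antipode (R := k) (rc.left q)))
          LinearMap.id (bigMap ζ (comul (R := k) (rc.right q))) := by
        rw [map_sum]
        exact Finset.sum_congr rfl fun q _ => (map_act_bigMap ζ _ _).symm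
    _ = ∑ q ∈ rc.index, Coalgebra.counit (R := k) (rc.right q) •
          TensorProduct.map (actV (antipode (R := k) (rc.left q))) LinearMap.id ζ := by
        refine Finset.sum_congr rfl fun q _ => ?_
        rw [hq q, map_smul]
    _ = TensorProduct.map (actV (antipode (R := k) c)) LinearMap.id ζ := by
        have : ∀ q ∈ rc.index, Coalgebra.counit (R := k) (rc.right q) •
            TensorProduct.map (actV (antipode (R := k) (rc.left q))) LinearMap.id ζ
            = bigMap ζ ((Coalgebra.counit (R := k) (rc.right q) •
                antipode (R := k) (rc.left q)) ⊗ₜ[k] (1 : H)) := by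
          intro q _
          rw [← TensorProduct.smul_tmul', map_smul, bigMap_tmul, Ltrans_one]
        rw [Finset.sum_congr rfl this,
          ← map_sum (bigMap ζ) (fun q => (Coalgebra.counit (R := k) (rc.right q) •
              antipode (R := k) (rc.left q)) ⊗ₜ[k] (1 : H)) rc.index,
          ← TensorProduct.sum_tmul]
        have : ∑ q ∈ rc.index, Coalgebra.counit (R := k) (rc.right q) •
            antipode (R := k) (rc.left q) = antipode (R := k) c := by
          have h' : ∀ q ∈ rc.index, Coalgebra.counit (R := k) (rc.right q) •
              antipode (R := k) (rc.left q)
              = antipode (R := k) (Coalgebra.counit (R := k) (rc.right q) • rc.left q) :=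
            fun q _ => (map_smul _ _ _).symm
          rw [Finset.sum_congr rfl h', ← map_sum, sum_smul_counit rc]
        rw [this, bigMap_tmul, Ltrans_one]

/-- for a Hopf subalgebra `B ⊆ H` and `Ξ` the restriction to `B` of a
finite-dimensional `H`-module `V`, the space `S(Ξ)` is a free `A^B`-module of rank
`dim Ξ`: the map `κ(v ⊗ f) = Σ v₍₀₎ ⊗ f * (S⁻¹)ᵗ(v₍₁₎)` restricts to an `A^B`-module
isomorphism of `S(Ξ)` onto `Ξ ⊗ A^B`. -/
theorem stmt19
    (hΔ : ∀ b ∈ B, (Coalgebra.comul b : H ⊗[k] H) ∈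
      LinearMap.range (TensorProduct.map B.val.toLinearMap B.val.toLinearMap))
    (hS : ∀ b ∈ B, HopfAlgebra.antipode (R := k) b ∈ B)
    (b : Module.Basis ι k V) (Sinv : H →ₗ[k] H)
    (hS1 : Sinv ∘ₗ HopfAlgebra.antipode (R := k) = LinearMap.id)
    (hS2 : HopfAlgebra.antipode (R := k) ∘ₗ Sinv = LinearMap.id) :
    Set.InjOn (kap b Sinv) (SXi B) ∧
    kap b Sinv '' (SXi B) =
      (LinearMap.range (TensorProduct.map (LinearMap.id : V →ₗ[k] V)
        (ABsub B).subtype) : Set (V ⊗[k] (H →ₗ[k] k))) ∧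
    (∀ f ∈ ABsub B, ∀ ζ ∈ SXi B,
      kap b Sinv (TensorProduct.map (LinearMap.id : V →ₗ[k] V) (convL f) ζ) =
      TensorProduct.map (LinearMap.id : V →ₗ[k] V) (convL f) (kap b Sinv ζ)) := by
  refine ⟨?_, ?_, ?_⟩
  · intro ζ₁ _ ζ₂ _ h
    have := congrArg (kap b LinearMap.id) h
    rwa [nu_kap b Sinv hS1 hS2, nu_kap b Sinv hS1 hS2] at this
  · ext η
    constructor
    · rintro ⟨ζ, hζ, rfl⟩
      rw [SetLike.mem_coe]
      exact (mem_range_iff B b _).mpr (sxi_fwd B b Sinv hS1 hS2 hΔ hζ)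
    · intro hη
      rw [SetLike.mem_coe] at hη
      have hη' := (mem_range_iff B b η).mp hη
      have hKζ : kap b Sinv (kap b LinearMap.id η) = η := kap_nu b Sinv hS1 hS2 η
      refine ⟨kap b LinearMap.id η, ?_, hKζ⟩
      apply sxi_bwd B b Sinv hS1 hS2 hΔ
      intro c hc
      rw [hKζ]
      exact hη' c hc
  · intro f _ ζ _
    exact kap_convL b Sinv f ζ

end
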